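/- arXiv:math/0210387 — 4 statements merged into one kernel-verified Lean document; each statement's English description precedes it below -/
import Mathlib

section
/- Every inference rule of system SKS (atomic interaction ai↓, atomic cut ai↑, switch s, contraction c↓, cocontraction c↑, weakening w↓, coweakening w↑) is sound: if the premise evaluates to true under an assignment, then the conclusion evaluates to true under that assignment. Consequently every structure provable in SKS is a boolean tautology. -/
/-- Structures of system SKS. -/
inductive Str : Type
  | f : Str
  | t : Str
  | atom (n : ℕ) : Str
  | or (A B : Str) : Str
  | and (A B : Str) : Str
  | neg (A : Str) : Str

/-- Positive contexts: a structure with one hole, not under a negation. -/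
inductive Ctx : Type
  | hole : Ctx
  | orl (S : Ctx) (T : Str) : Ctx
  | orr (T : Str) (S : Ctx) : Ctx
  | andl (S : Ctx) (T : Str) : Ctx
  | andr (T : Str) (S : Ctx) : Ctx

def Ctx.fill : Ctx → Str → Str
  | .hole, R => R
  | .orl S T, R => .or (S.fill R) T
  | .orr T S, R => .or T (S.fill R)
  | .andl S T, R => .and (S.fill R) T
  | .andr T S, R => .and T (S.fill R)

/-- Structural equivalence `=` of SKS. -/
inductive equiv : Str → Str → Prop
  | refl (R) : equiv R R
  | symm {A B} : equiv A B → equiv B A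
  | trans {A B C} : equiv A B → equiv B C → equiv A C
  | or_congr {A B C D} : equiv A B → equiv C D → equiv (.or A C) (.or B D)
  | and_congr {A B C D} : equiv A B → equiv C D → equiv (.and A C) (.and B D)
  | neg_congr {A B} : equiv A B → equiv (.neg A) (.neg B)
  | or_assoc (A B C) : equiv (.or (.or A B) C) (.or A (.or B C))
  | or_comm (A B) : equiv (.or A B) (.or B A)
  | and_assoc (A B C) : equiv (.and (.and A B) C) (.and A (.and B C))
  | and_comm (A B) : equiv (.and A B) (.and B A)
  | dm_or (A B) : equiv (.neg (.or A B)) (.and (.neg A) (.neg B))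
  | dm_and (A B) : equiv (.neg (.and A B)) (.or (.neg A) (.neg B))
  | neg_neg (A) : equiv (.neg (.neg A)) A
  | neg_f : equiv (.neg .f) .t
  | neg_t : equiv (.neg .t) .f
  | or_f (R) : equiv (.or .f R) R
  | and_t (R) : equiv (.and .t R) R
  | or_t_t : equiv (.or .t .t) .t
  | and_f_f : equiv (.and .f .f) .f

/-- One inference step of SKS, applied in an arbitrary positive context. -/
inductive step : Str → Str → Prop
  | ai_down (S : Ctx) (a : ℕ) :
      step (S.fill .t) (S.fill (.or (.atom a) (.neg (.atom a))))
  | ai_up (S : Ctx) (a : ℕ) :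
      step (S.fill (.and (.atom a) (.neg (.atom a)))) (S.fill .f)
  | s (S : Ctx) (R U T : Str) :
      step (S.fill (.and (.or R U) T)) (S.fill (.or (.and R T) U))
  | c_down (S : Ctx) (R : Str) : step (S.fill (.or R R)) (S.fill R)
  | c_up (S : Ctx) (R : Str) : step (S.fill R) (S.fill (.and R R))
  | w_down (S : Ctx) (R : Str) : step (S.fill .f) (S.fill R)
  | w_up (S : Ctx) (R : Str) : step (S.fill R) (S.fill .t)

/-- Derivations in SKS: chains of rule instances and equivalence steps. -/
inductive Deriv : Str → Str → Prop
  | refl (R) : Deriv R R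
  | step {A B C} : step A B → Deriv B C → Deriv A C
  | eq {A B C} : equiv A B → Deriv B C → Deriv A C

/-- Boolean evaluation of structures. -/
def eval (v : ℕ → Bool) : Str → Bool
  | .f => false
  | .t => true
  | .atom n => v n
  | .or A B => eval v A || eval v B
  | .and A B => eval v A && eval v B
  | .neg A => !(eval v A)

lemma ctx_mono (S : Ctx) (A B : Str) (v : ℕ → Bool)
    (h : eval v A = true → eval v B = true) :
    eval v (S.fill A) = true → eval v (S.fill B) = true := by
  induction S with
  | hole => exact h
  | orl S T ih => simp only [Ctx.fill, eval, Bool.or_eq_true]; rintro (h1 | h1)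
                  · exact Or.inl (ih h1)
                  · exact Or.inr h1
  | orr T S ih => simp only [Ctx.fill, eval, Bool.or_eq_true]; rintro (h1 | h1)
                  · exact Or.inl h1
                  · exact Or.inr (ih h1)
  | andl S T ih => simp only [Ctx.fill, eval, Bool.and_eq_true]; rintro ⟨h1, h2⟩
                   exact ⟨ih h1, h2⟩
  | andr T S ih => simp only [Ctx.fill, eval, Bool.and_eq_true]; rintro ⟨h1, h2⟩
                   exact ⟨h1, ih h2⟩

lemma equiv_eval {A B : Str} (h : equiv A B) (v : ℕ → Bool) :
    eval v A = eval v B := by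
  induction h with
  | refl => rfl
  | symm _ ih => exact ih.symm
  | trans _ _ ih1 ih2 => exact ih1.trans ih2
  | or_congr _ _ ih1 ih2 => simp [eval, ih1, ih2]
  | and_congr _ _ ih1 ih2 => simp [eval, ih1, ih2]
  | neg_congr _ ih => simp [eval, ih]
  | or_assoc => simp [eval, Bool.or_assoc]
  | or_comm => simp [eval, Bool.or_comm]
  | and_assoc => simp [eval, Bool.and_assoc]
  | and_comm => simp [eval, Bool.and_comm]
  | dm_or => simp [eval]
  | dm_and => simp [eval]
  | neg_neg => simp [eval]
  | neg_f => simp [eval]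
  | neg_t => simp [eval]
  | or_f => simp [eval]
  | and_t => simp [eval]
  | or_t_t => simp [eval]
  | and_f_f => simp [eval]

lemma step_sound {A B : Str} (h : step A B) (v : ℕ → Bool)
    (hA : eval v A = true) : eval v B = true := by
  induction h with
  | ai_down S a => refine ctx_mono S _ _ v ?_ hA; intro _; simp [eval]
  | ai_up S a => refine ctx_mono S _ _ v ?_ hA; intro h; simp [eval] at h
  | s S R U T => refine ctx_mono S _ _ v ?_ hA
                 simp only [eval, Bool.and_eq_true, Bool.or_eq_true]
                 rintro ⟨h1 | h1, h2⟩
                 · exact Or.inl ⟨h1, h2⟩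
                 · exact Or.inr h1
  | c_down S R => refine ctx_mono S _ _ v ?_ hA; simp [eval]
  | c_up S R => refine ctx_mono S _ _ v ?_ hA; simp [eval]
  | w_down S R => refine ctx_mono S _ _ v ?_ hA; simp [eval]
  | w_up S R => refine ctx_mono S _ _ v ?_ hA; simp [eval]

/-- every rule of SKS is sound (true premise gives true conclusion),
and consequently every provable structure is a boolean tautology. -/
theorem sks_sound :
    (∀ A B : Str, step A B → ∀ v : ℕ → Bool, eval v A = true → eval v B = true) ∧
    (∀ R : Str, Deriv .t R → ∀ v : ℕ → Bool, eval v R = true) := by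
  constructor
  · exact fun A B h v hA => step_sound h v hA
  · intro R hd v
    have : ∀ A B : Str, Deriv A B → eval v A = true → eval v B = true := by
      intro A B h
      induction h with
      | refl => exact id
      | step hs _ ih => exact fun hA => ih (step_sound hs v hA)
      | eq he _ ih => exact fun hA => ih ((equiv_eval he v) ▸ hA)
    exact this _ _ hd rfl
end

section
/- The generic (non-atomic) cut rule is derivable from atomic cut and switch: for all structures R, T and any context S{ }, if S(R,T,[¬R,¬T]) is derivable then S{f} is derivable using only switch, atomic cut, and structural equivalence, by induction on R and T. In particular, any instance of the cut i↑: S(R,¬R) ⟹ S{f} can be replaced by a derivation using only s and ai↑. -/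
/-- Steps using only switch and atomic cut. -/
inductive stepCut : Str → Str → Prop
  | ai_up (S : Ctx) (a : ℕ) :
      stepCut (S.fill (.and (.atom a) (.neg (.atom a)))) (S.fill .f)
  | s (S : Ctx) (R U T : Str) :
      stepCut (S.fill (.and (.or R U) T)) (S.fill (.or (.and R T) U))

inductive derivCut : Str → Str → Prop
  | refl (R) : derivCut R R
  | step {A B C} : stepCut A B → derivCut B C → derivCut A C
  | eq {A B C} : equiv A B → derivCut B C → derivCut A C

def Ctx.comp : Ctx → Ctx → Ctx
  | .hole, D => D
  | .orl S T, D => .orl (S.comp D) T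
  | .orr T S, D => .orr T (S.comp D)
  | .andl S T, D => .andl (S.comp D) T
  | .andr T S, D => .andr T (S.comp D)

theorem Ctx.fill_comp (S D : Ctx) (R : Str) :
    (S.comp D).fill R = S.fill (D.fill R) := by
  induction S with
  | hole => rfl
  | orl S T ih => simp [Ctx.comp, Ctx.fill, ih]
  | orr T S ih => simp [Ctx.comp, Ctx.fill, ih]
  | andl S T ih => simp [Ctx.comp, Ctx.fill, ih]
  | andr T S ih => simp [Ctx.comp, Ctx.fill, ih]

theorem equiv_fill (S : Ctx) {A B : Str} (h : equiv A B) :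
    equiv (S.fill A) (S.fill B) := by
  induction S with
  | hole => exact h
  | orl S T ih => exact equiv.or_congr ih (equiv.refl T)
  | orr T S ih => exact equiv.or_congr (equiv.refl T) ih
  | andl S T ih => exact equiv.and_congr ih (equiv.refl T)
  | andr T S ih => exact equiv.and_congr (equiv.refl T) ih

theorem derivCut.trans {A B C : Str} (h1 : derivCut A B) (h2 : derivCut B C) :
    derivCut A C := by
  induction h1 with
  | refl => exact h2
  | step s _ ih => exact .step s (ih h2)
  | eq e _ ih => exact .eq e (ih h2)

/-- The cut rule on arbitrary structures, by induction on the structure. -/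
theorem cut_lemma (R : Str) :
    ∀ S : Ctx, derivCut (S.fill (.and R (.neg R))) (S.fill .f) := by
  induction R with
  | f =>
    intro S
    exact .eq (equiv_fill S (((equiv.refl Str.f).and_congr equiv.neg_f).trans
      ((equiv.and_comm _ _).trans (equiv.and_t _)))) (.refl _)
  | t =>
    intro S
    exact .eq (equiv_fill S (((equiv.refl Str.t).and_congr equiv.neg_t).trans
      (equiv.and_t _))) (.refl _)
  | atom n =>
    intro S
    exact .step (stepCut.ai_up S n) (.refl _)
  | neg A ih =>
    intro S
    exact .eq (equiv_fill S ((((equiv.refl (Str.neg A)).and_congr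
      (equiv.neg_neg A))).trans (equiv.and_comm _ _))) (ih S)
  | and A B ihA ihB =>
    intro S
    have e1 : equiv (.and (.and A B) (.neg (.and A B)))
        (.and A (.and (.or (.neg B) (.neg A)) B)) :=
      ((equiv.refl _).and_congr (equiv.dm_and A B)).trans
        ((equiv.and_assoc A B _).trans
          ((equiv.refl A).and_congr ((equiv.and_comm B _).trans
            ((equiv.or_comm _ _).and_congr (equiv.refl B)))))
    have sw := stepCut.s (S.comp (.andr A .hole)) (.neg B) (.neg A) B
    rw [Ctx.fill_comp, Ctx.fill_comp] at sw
    have e2 : equiv (.and A (.or (.and (.neg B) B) (.neg A)))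
        (.and A (.or (.and B (.neg B)) (.neg A))) :=
      (equiv.refl A).and_congr ((equiv.and_comm _ _).or_congr (equiv.refl _))
    have cutB := ihB (S.comp (.andr A (.orl .hole (.neg A))))
    rw [Ctx.fill_comp, Ctx.fill_comp] at cutB
    have e3 : equiv (.and A (.or .f (.neg A))) (.and A (.neg A)) :=
      (equiv.refl A).and_congr (equiv.or_f _)
    exact .eq (equiv_fill S e1) (.step sw (.eq (equiv_fill S e2)
      (cutB.trans (.eq (equiv_fill S e3) (ihA S)))))
  | or A B ihA ihB =>
    intro S
    have e1 : equiv (.and (.or A B) (.neg (.or A B)))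
        (.and (.neg A) (.and (.or B A) (.neg B))) :=
      (((equiv.refl _).and_congr (equiv.dm_or A B)).trans
        (equiv.and_comm _ _)).trans
        ((equiv.and_assoc _ _ _).trans
          ((equiv.refl (Str.neg A)).and_congr ((equiv.and_comm _ _).trans
            ((equiv.or_comm A B).and_congr (equiv.refl _)))))
    have sw := stepCut.s (S.comp (.andr (.neg A) .hole)) B A (.neg B)
    rw [Ctx.fill_comp, Ctx.fill_comp] at sw
    have cutB := ihB (S.comp (.andr (.neg A) (.orl .hole A)))
    rw [Ctx.fill_comp, Ctx.fill_comp] at cutB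
    have e3 : equiv (.and (.neg A) (.or .f A)) (.and A (.neg A)) :=
      ((equiv.refl _).and_congr (equiv.or_f A)).trans (equiv.and_comm _ _)
    exact .eq (equiv_fill S e1) (.step sw
      (cutB.trans (.eq (equiv_fill S e3) (ihA S))))

/-- the generic cut is derivable from atomic cut and switch:
from `S(R,T,[¬R,¬T])` one derives `S{f}`, and in particular any instance of
`i↑ : S(R,¬R) ⟹ S{f}` is replaceable by a derivation using only `s` and `ai↑`. -/
theorem generic_cut_derivable :
    (∀ (S : Ctx) (R T : Str),
      derivCut (S.fill (.and (.and R T) (.or (.neg R) (.neg T)))) (S.fill .f)) ∧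
    (∀ (S : Ctx) (R : Str),
      derivCut (S.fill (.and R (.neg R))) (S.fill .f)) := by
  constructor
  · intro S R T
    have e1 : equiv (.and (.and R T) (.or (.neg R) (.neg T)))
        (.and R (.and (.or (.neg T) (.neg R)) T)) :=
      (equiv.and_assoc R T _).trans
        ((equiv.refl R).and_congr ((equiv.and_comm T _).trans
          ((equiv.or_comm _ _).and_congr (equiv.refl T))))
    have sw := stepCut.s (S.comp (.andr R .hole)) (.neg T) (.neg R) T
    rw [Ctx.fill_comp, Ctx.fill_comp] at sw
    have e2 : equiv (.and R (.or (.and (.neg T) T) (.neg R)))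
        (.and R (.or (.and T (.neg T)) (.neg R))) :=
      (equiv.refl R).and_congr ((equiv.and_comm _ _).or_congr (equiv.refl _))
    have cutT := cut_lemma T (S.comp (.andr R (.orl .hole (.neg R))))
    rw [Ctx.fill_comp, Ctx.fill_comp] at cutT
    have e3 : equiv (.and R (.or .f (.neg R))) (.and R (.neg R)) :=
      (equiv.refl R).and_congr (equiv.or_f _)
    exact .eq (equiv_fill S e1) (.step sw (.eq (equiv_fill S e2)
      (cutT.trans (.eq (equiv_fill S e3) (cut_lemma R S)))))
  · intro S R
    exact cut_lemma R S
end

section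
/- Weak consistency of SKS: there is no proof of f, i.e., no derivation in SKS with premise t and conclusion f. -/
def ev : Str → Bool
  | .f => false
  | .t => true
  | .atom _ => true
  | .or A B => ev A || ev B
  | .and A B => ev A && ev B
  | .neg A => !(ev A)

lemma ev_mono (S : Ctx) {A B : Str} (h : ev A → ev B) :
    ev (S.fill A) → ev (S.fill B) := by
  induction S with
  | hole => exact h
  | orl S T ih => simp [Ctx.fill, ev]; tauto
  | orr T S ih => simp [Ctx.fill, ev]; tauto
  | andl S T ih => simp [Ctx.fill, ev]; tauto
  | andr T S ih => simp [Ctx.fill, ev]; tauto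

lemma ev_equiv {A B : Str} (h : equiv A B) : ev A = ev B := by
  induction h <;> simp_all [ev] <;>
    first
    | exact Bool.or_assoc ..
    | exact Bool.or_comm ..
    | exact Bool.and_assoc ..
    | exact Bool.and_comm ..

lemma ev_step {A B : Str} (h : step A B) : ev A → ev B := by
  cases h with
  | ai_down S a => exact ev_mono S (by simp [ev])
  | ai_up S a => exact ev_mono S (by simp [ev])
  | s S R U T => exact ev_mono S (by simp [ev]; tauto)
  | c_down S R => exact ev_mono S (by simp [ev])
  | c_up S R => exact ev_mono S (by simp [ev])
  | w_down S R => exact ev_mono S (by simp [ev])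
  | w_up S R => exact ev_mono S (by simp [ev])

lemma ev_deriv {A B : Str} (h : Deriv A B) : ev A → ev B := by
  induction h with
  | refl R => exact id
  | step hs _ ih => exact fun h => ih (ev_step hs h)
  | eq he _ ih => exact fun h => ih (ev_equiv he ▸ h)

/-- weak consistency of SKS: there is no proof of `f`. -/
theorem weak_consistency : ¬ Deriv Str.t Str.f := by
  intro d
  exact absurd (ev_deriv d (by simp [ev])) (by simp [ev])
end

section
/- Flipping (duality) of derivations: if there is a derivation from P to Q in SKS, then there is a derivation from ¬Q to ¬P. Each rule of SKS has a dual rule in SKS (ai↓ ↔ ai↑, c↓ ↔ c↑, w↓ ↔ w↑, and switch is self-dual), obtained by negating premise and conclusion and exchanging them. -/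
namespace FlipAux

/-- Dual of a positive context: swap `or`/`and`. -/
def Ctx.dual : Ctx → Ctx
  | .hole => .hole
  | .orl S T => .andl (Ctx.dual S) (.neg T)
  | .orr T S => .andr (.neg T) (Ctx.dual S)
  | .andl S T => .orl (Ctx.dual S) (.neg T)
  | .andr T S => .orr (.neg T) (Ctx.dual S)

theorem fill_congr (S : Ctx) {A B : Str} (h : equiv A B) :
    equiv (S.fill A) (S.fill B) := by
  induction S with
  | hole => exact h
  | orl S T ih => exact equiv.or_congr ih (equiv.refl T)
  | orr T S ih => exact equiv.or_congr (equiv.refl T) ih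
  | andl S T ih => exact equiv.and_congr ih (equiv.refl T)
  | andr T S ih => exact equiv.and_congr (equiv.refl T) ih

theorem neg_fill (S : Ctx) (A : Str) :
    equiv (.neg (S.fill A)) ((Ctx.dual S).fill (.neg A)) := by
  induction S with
  | hole => exact equiv.refl _
  | orl S T ih =>
      exact equiv.trans (equiv.dm_or _ _) (equiv.and_congr ih (equiv.refl _))
  | orr T S ih =>
      exact equiv.trans (equiv.dm_or _ _) (equiv.and_congr (equiv.refl _) ih)
  | andl S T ih =>
      exact equiv.trans (equiv.dm_and _ _) (equiv.or_congr ih (equiv.refl _))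
  | andr T S ih =>
      exact equiv.trans (equiv.dm_and _ _) (equiv.or_congr (equiv.refl _) ih)

theorem Deriv.trans {A B C : Str} (h1 : Deriv A B) (h2 : Deriv B C) : Deriv A C := by
  induction h1 with
  | refl R => exact h2
  | step s _ ih => exact Deriv.step s (ih h2)
  | eq e _ ih => exact Deriv.eq e (ih h2)

theorem Deriv.eq' {A B C : Str} (h1 : Deriv A B) (e : equiv B C) : Deriv A C :=
  Deriv.trans h1 (Deriv.eq e (Deriv.refl C))

theorem step_flip {A B : Str} (h : step A B) : Deriv (.neg B) (.neg A) := by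
  cases h with
  | ai_down S a =>
      refine Deriv.eq (equiv.trans (neg_fill S _)
        (fill_congr _ (equiv.trans (equiv.dm_or _ _)
          (equiv.trans (equiv.and_comm _ _)
            (equiv.and_congr (equiv.neg_neg _) (equiv.refl _)))))) ?_
      refine Deriv.step (step.ai_up (Ctx.dual S) a) ?_
      exact Deriv.eq (equiv.symm (equiv.trans (neg_fill S _)
        (fill_congr _ equiv.neg_t))) (Deriv.refl _)
  | ai_up S a =>
      refine Deriv.eq (equiv.trans (neg_fill S _) (fill_congr _ equiv.neg_f)) ?_
      refine Deriv.step (step.ai_down (Ctx.dual S) a) ?_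
      exact Deriv.eq (equiv.symm (equiv.trans (neg_fill S _)
        (fill_congr _ (equiv.trans (equiv.dm_and _ _)
          (equiv.trans (equiv.or_comm _ _)
            (equiv.or_congr (equiv.neg_neg _) (equiv.refl _))))))) (Deriv.refl _)
  | s S R U T =>
      refine Deriv.eq (equiv.trans (neg_fill S _)
        (fill_congr _ (equiv.trans (equiv.dm_or _ _)
          (equiv.and_congr (equiv.dm_and _ _) (equiv.refl _))))) ?_
      refine Deriv.step (step.s (Ctx.dual S) (.neg R) (.neg T) (.neg U)) ?_
      exact Deriv.eq (equiv.symm (equiv.trans (neg_fill S _)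
        (fill_congr _ (equiv.trans (equiv.dm_and _ _)
          (equiv.or_congr (equiv.dm_or _ _) (equiv.refl _)))))) (Deriv.refl _)
  | c_down S R =>
      refine Deriv.eq (neg_fill S R) ?_
      refine Deriv.step (step.c_up (Ctx.dual S) (.neg R)) ?_
      exact Deriv.eq (equiv.symm (equiv.trans (neg_fill S _)
        (fill_congr _ (equiv.dm_or _ _)))) (Deriv.refl _)
  | c_up S R =>
      refine Deriv.eq (equiv.trans (neg_fill S _) (fill_congr _ (equiv.dm_and _ _))) ?_
      refine Deriv.step (step.c_down (Ctx.dual S) (.neg R)) ?_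
      exact Deriv.eq (equiv.symm (neg_fill S R)) (Deriv.refl _)
  | w_down S R =>
      refine Deriv.eq (neg_fill S R) ?_
      refine Deriv.step (step.w_up (Ctx.dual S) (.neg R)) ?_
      exact Deriv.eq (equiv.symm (equiv.trans (neg_fill S _)
        (fill_congr _ equiv.neg_f))) (Deriv.refl _)
  | w_up S R =>
      refine Deriv.eq (equiv.trans (neg_fill S _) (fill_congr _ equiv.neg_t)) ?_
      refine Deriv.step (step.w_down (Ctx.dual S) (.neg R)) ?_
      exact Deriv.eq (equiv.symm (neg_fill S R)) (Deriv.refl _)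

end FlipAux

/-- flipping (duality) of derivations: from a derivation from `P`
to `Q` we get a derivation from `¬Q` to `¬P`. -/
theorem deriv_flip (P Q : Str) (h : Deriv P Q) : Deriv (.neg Q) (.neg P) := by
  induction h with
  | refl R => exact Deriv.refl _
  | step s _ ih => exact FlipAux.Deriv.trans ih (FlipAux.step_flip s)
  | eq e _ ih =>
      exact FlipAux.Deriv.eq' ih (equiv.neg_congr (equiv.symm e))
end
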